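/- Let m ≥ n, let A ∈ ℝ^{m×n} have full column rank n, let W ∈ ℝ^{n×n} be symmetric positive definite, let w ∈ ℝ^n and b = A w, and let x ∈ ℝ^n. Let S ∈ ℝ^{m×m} be invertible, set M = Sᵀ A W Aᵀ S, and let N ∈ ℝ^{m×m} satisfy the four Penrose conditions for M (M N M = M, N M N = N, (M N)ᵀ = M N, (N M)ᵀ = N M). Then x + W Aᵀ S N Sᵀ (b − A x) = w; in particular the iterate after this step solves A x = b. -/
import Mathlib

open Matrix

lemma cancel_left {n m k : ℕ} (B : Matrix (Fin m) (Fin n) ℝ)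
    (hB : ∀ v, B.mulVec v = 0 → v = 0) (P Q : Matrix (Fin n) (Fin k) ℝ)
    (h : B * P = B * Q) : P = Q := by
  have hR : B * (P - Q) = 0 := by rw [Matrix.mul_sub, h, sub_self]
  have hPQ : P - Q = 0 := by
    funext i j
    have hcol : B.mulVec (fun k => (P - Q) k j) = 0 := by
      funext i'
      simpa [Matrix.mulVec, dotProduct, Matrix.mul_apply] using
        congrFun (congrFun hR i') j
    have := congrFun (hB _ hcol) i
    simpa using this
  exact sub_eq_zero.mp hPQ

theorem stmt2 (m n : ℕ) (hmn : n ≤ m)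
    (A : Matrix (Fin m) (Fin n) ℝ)
    (hA : LinearIndependent ℝ (fun j i => A i j))
    (W : Matrix (Fin n) (Fin n) ℝ) (hW : W.PosDef)
    (w : Fin n → ℝ) (b : Fin m → ℝ) (hb : b = A.mulVec w)
    (x : Fin n → ℝ)
    (S : Matrix (Fin m) (Fin m) ℝ) (hS : IsUnit S)
    (M N : Matrix (Fin m) (Fin m) ℝ)
    (hM : M = Sᵀ * A * W * Aᵀ * S)
    (h1 : M * N * M = M)
    (h2 : N * M * N = N)
    (h3 : (M * N)ᵀ = M * N)
    (h4 : (N * M)ᵀ = N * M) :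
    x + (W * Aᵀ * S).mulVec (N.mulVec (Sᵀ.mulVec (b - A.mulVec x))) = w ∧
    A.mulVec (x + (W * Aᵀ * S).mulVec (N.mulVec (Sᵀ.mulVec (b - A.mulVec x)))) = b := by
  set B : Matrix (Fin m) (Fin n) ℝ := Sᵀ * A with hB
  have hSdet : IsUnit S.det := (Matrix.isUnit_iff_isUnit_det S).mp hS
  have hSTdet : IsUnit Sᵀ.det := by simpa [Matrix.det_transpose] using hSdet
  have hAinj : ∀ v : Fin n → ℝ, A.mulVec v = 0 → v = 0 := by
    intro v hv
    have := Fintype.linearIndependent_iff.mp hA v ?_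
    · funext i; exact this i
    · funext i
      have := congrFun hv i
      simpa [Matrix.mulVec, dotProduct, mul_comm] using this
  have hBinj : ∀ v : Fin n → ℝ, B.mulVec v = 0 → v = 0 := by
    intro v hv
    apply hAinj
    have h0 : Sᵀ.mulVec (A.mulVec v) = 0 := by
      simpa [hB, Matrix.mulVec_mulVec] using hv
    have := congrArg (fun y => (Sᵀ)⁻¹.mulVec y) h0
    simpa [Matrix.mulVec_mulVec, ← Matrix.mul_assoc,
      Matrix.nonsing_inv_mul _ hSTdet] using this
  have hM' : M = B * W * Bᵀ := by
    simp [hM, hB, Matrix.transpose_mul, Matrix.mul_assoc]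
  have hWsymm : Wᵀ = W := hW.isHermitian.eq
  have step1 : W * Bᵀ * N * (B * W * Bᵀ) = W * Bᵀ := by
    apply cancel_left B hBinj
    calc B * (W * Bᵀ * N * (B * W * Bᵀ)) = M * N * M := by
          simp [hM', Matrix.mul_assoc]
      _ = M := h1
      _ = B * (W * Bᵀ) := by simp [hM', Matrix.mul_assoc]
  have step2 : W * Bᵀ * N * B * W = W := by
    have h' : (W * Bᵀ * N * B * W)ᵀ = Wᵀ := by
      apply cancel_left B hBinj
      calc B * (W * Bᵀ * N * B * W)ᵀ = (W * Bᵀ * N * (B * W * Bᵀ))ᵀ := by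
            simp [Matrix.transpose_mul, Matrix.mul_assoc]
        _ = (W * Bᵀ)ᵀ := by rw [step1]
        _ = B * Wᵀ := by simp [Matrix.transpose_mul]
    have := congrArg Matrix.transpose h'
    simpa using this
  have hWdet : IsUnit W.det := isUnit_iff_ne_zero.mpr (ne_of_gt hW.det_pos)
  have key : W * Bᵀ * N * B = 1 := by
    have := congrArg (fun X => X * W⁻¹) step2
    simpa [Matrix.mul_assoc, Matrix.mul_nonsing_inv _ hWdet] using this
  -- finish
  have hupd : (W * Aᵀ * S).mulVec (N.mulVec (Sᵀ.mulVec (b - A.mulVec x))) = w - x := by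
    have hres : b - A.mulVec x = A.mulVec (w - x) := by
      rw [hb, Matrix.mulVec_sub]
    rw [hres, Matrix.mulVec_mulVec, Matrix.mulVec_mulVec, Matrix.mulVec_mulVec]
    have hmat : W * Aᵀ * S * N * Sᵀ * A = 1 := by
      have : W * Aᵀ * S * N * Sᵀ * A = W * Bᵀ * N * B := by
        simp [hB, Matrix.transpose_mul, Matrix.mul_assoc]
      rw [this, key]
    rw [hmat, Matrix.one_mulVec]
  constructor
  · rw [hupd]; abel
  · rw [hupd]
    have : x + (w - x) = w := by abel
    rw [this, hb]
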